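/- Let H be a Hilbert space, x ∈ H, e ∈ H a unit vector, and M ≥ m > 0. If Re⟨M e − x, x − m e⟩ ≥ 0, then (2√(mM)/(M+m)) · ‖x‖ ≤ Re⟨x, e⟩. -/

import Mathlib

theorem stmt_7 {𝕜 H : Type*} [RCLike 𝕜] [NormedAddCommGroup H] [InnerProductSpace 𝕜 H]
    {m M : ℝ} (hm : 0 < m) (hmM : m ≤ M) {e : H} (he : ‖e‖ = 1) {x : H}
    (h : 0 ≤ RCLike.re (inner 𝕜 ((M : 𝕜) • e - x) (x - (m : 𝕜) • e) : 𝕜)) :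
    (2 * Real.sqrt (m * M) / (M + m)) * ‖x‖ ≤ RCLike.re (inner 𝕜 x e : 𝕜) := by
  have hkey : ‖x‖ ^ 2 + m * M ≤ (M + m) * RCLike.re (inner 𝕜 x e : 𝕜) := by
    simp only [inner_sub_left, inner_sub_right, inner_smul_left, inner_smul_right,
      RCLike.conj_ofReal, map_sub, map_add, RCLike.mul_re, RCLike.ofReal_re,
      RCLike.ofReal_im, inner_self_eq_norm_sq, inner_self_im, inner_re_symm (𝕜 := 𝕜) e x] at h
    rw [he] at h
    nlinarith [h]
  have hs : Real.sqrt (m * M) ^ 2 = m * M := Real.sq_sqrt (mul_nonneg hm.le (hm.trans_le hmM).le)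
  have hpos : (0 : ℝ) < M + m := by linarith
  rw [div_mul_eq_mul_div, div_le_iff₀ hpos]
  nlinarith [sq_nonneg (‖x‖ - Real.sqrt (m * M))]
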